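/- (Masked rollout Q-value bound) Fix dynamics p, model p̃, policy π, and binary mask M : S × A → {0,1}. Define the masked transition: the rollout follows p̃ until the first time H at which M(s_H, a_H) = 0, after which it follows p. Let ε = max_{(s,a) : M(s,a)=1} D_TV[p(·|s,a), p̃(·|s,a)], and let w(t; s, a) = Pr[t < H | p̃, π, M, s_0 = s, a_0 = a] be the probability the rollout is still model-based at step t. If rewards satisfy |r| ≤ r_max, then for all (s,a): |Q^π(s,a) - Q̃^π_mask(s,a)| ≤ (2 r_max / (1-γ)) · ε · Σ_{t=0}^∞ γ^t w(t; s, a), where Q^π is the true discounted action-value and Q̃^π_mask is the discounted action-value of the masked rollout process. -/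

import Mathlib

/-- Total-variation distance between two pmfs on a finite type. -/
noncomputable def tv {X : Type*} [Fintype X] (f g : X → ℝ) : ℝ :=
  (1 / 2) * ∑ x, |f x - g x|

/-- State-action distribution at step `t` of the Markov chain induced by
dynamics `P` and policy `π`, started at the fixed state-action pair `sa0`. -/
noncomputable def plainDist {S A : Type*} [Fintype S] [Fintype A] [DecidableEq S] [DecidableEq A]
    (P : S × A → S → ℝ) (π : S → A → ℝ) (sa0 : S × A) : ℕ → S × A → ℝ
  | 0 => fun sa => if sa = sa0 then 1 else 0
  | t + 1 => fun sa => (∑ sa', P sa' sa.1 * plainDist P π sa0 t sa') * π sa.1 sa.2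

/-- Distribution at step `t` of the masked rollout process, on the augmented
space `(S × A) × Bool` where the flag records whether `t < H` (the rollout is
still model-based, i.e. all masks so far were `1`).  Transitions use the model
`Pm` while the flag is `true` and the true dynamics `P` afterwards; the new
flag is the old flag conjoined with the mask of the new state-action pair. -/
noncomputable def maskedDist {S A : Type*} [Fintype S] [Fintype A] [DecidableEq S] [DecidableEq A]
    (P Pm : S × A → S → ℝ) (π : S → A → ℝ) (M : S × A → Bool) (sa0 : S × A) :
    ℕ → (S × A) × Bool → ℝ
  | 0 => fun x => if x.1 = sa0 ∧ x.2 = M sa0 then 1 else 0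
  | t + 1 => fun x =>
      ∑ y : (S × A) × Bool,
        maskedDist P Pm π M sa0 t y *
        (if y.2 then Pm y.1 x.1.1 else P y.1 x.1.1) * π x.1.1 x.1.2 *
        (if x.2 = (y.2 && M x.1) then 1 else 0)

/-- `w(t; s, a)`: the probability that step `t` of the masked rollout is still
model-based (`t < H`). -/
noncomputable def wProb {S A : Type*} [Fintype S] [Fintype A] [DecidableEq S] [DecidableEq A]
    (P Pm : S × A → S → ℝ) (π : S → A → ℝ) (M : S × A → Bool) (sa0 : S × A)
    (t : ℕ) : ℝ :=
  ∑ sa : S × A, maskedDist P Pm π M sa0 t (sa, true)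

section aux
variable {S A : Type*} [Fintype S] [Fintype A] [DecidableEq S] [DecidableEq A]
variable (P Pm : S × A → S → ℝ) (π : S → A → ℝ) (M : S × A → Bool) (sa0 : S × A)

lemma plainDist_nonneg (hP0 : ∀ sa s', 0 ≤ P sa s') (hπ0 : ∀ s a, 0 ≤ π s a) :
    ∀ t sa, 0 ≤ plainDist P π sa0 t sa
  | 0, sa => by simp only [plainDist]; split <;> norm_num
  | t+1, sa => by
      simp only [plainDist]
      exact mul_nonneg (Finset.sum_nonneg fun sa' _ =>
        mul_nonneg (hP0 _ _) (plainDist_nonneg hP0 hπ0 t sa')) (hπ0 _ _)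

lemma plainDist_mass (hP1 : ∀ sa, ∑ s', P sa s' = 1) (hπ1 : ∀ s, ∑ a, π s a = 1) :
    ∀ t, ∑ sa, plainDist P π sa0 t sa = 1
  | 0 => by simp [plainDist]
  | t+1 => by
      simp only [plainDist]
      rw [Fintype.sum_prod_type]
      have h1 : ∀ s : S,
          (∑ a, (∑ sa', P sa' s * plainDist P π sa0 t sa') * π s a)
            = ∑ sa', P sa' s * plainDist P π sa0 t sa' := by
        intro s; rw [← Finset.mul_sum, hπ1, mul_one]
      rw [Finset.sum_congr rfl fun s _ => h1 s, Finset.sum_comm]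
      have h2 : ∀ sa' : S × A,
          (∑ s, P sa' s * plainDist P π sa0 t sa') = plainDist P π sa0 t sa' := by
        intro sa'; rw [← Finset.sum_mul, hP1, one_mul]
      rw [Finset.sum_congr rfl fun sa' _ => h2 sa']
      exact plainDist_mass hP1 hπ1 t

lemma maskedDist_nonneg (hP0 : ∀ sa s', 0 ≤ P sa s') (hPm0 : ∀ sa s', 0 ≤ Pm sa s')
    (hπ0 : ∀ s a, 0 ≤ π s a) :
    ∀ t x, 0 ≤ maskedDist P Pm π M sa0 t x
  | 0, x => by simp only [maskedDist]; split <;> norm_num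
  | t+1, x => by
      simp only [maskedDist]
      refine Finset.sum_nonneg fun y _ => ?_
      have h1 := maskedDist_nonneg hP0 hPm0 hπ0 t y
      have hK : 0 ≤ (if y.2 then Pm y.1 x.1.1 else P y.1 x.1.1) := by
        split
        · exact hPm0 _ _
        · exact hP0 _ _
      have hind : 0 ≤ (if x.2 = (y.2 && M x.1) then (1:ℝ) else 0) := by split <;> norm_num
      exact mul_nonneg (mul_nonneg (mul_nonneg h1 hK) (hπ0 _ _)) hind

lemma maskedDist_mass (hP1 : ∀ sa, ∑ s', P sa s' = 1) (hPm1 : ∀ sa, ∑ s', Pm sa s' = 1)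
    (hπ1 : ∀ s, ∑ a, π s a = 1) :
    ∀ t, ∑ x : (S × A) × Bool, maskedDist P Pm π M sa0 t x = 1
  | 0 => by
      simp only [maskedDist]
      have h : ∀ x : (S × A) × Bool,
          (if x.1 = sa0 ∧ x.2 = M sa0 then (1:ℝ) else 0)
            = if x = (sa0, M sa0) then 1 else 0 := by
        rintro ⟨a, b⟩; simp [Prod.ext_iff]
      rw [Finset.sum_congr rfl fun x _ => h x,
        Finset.sum_ite_eq' Finset.univ ((sa0, M sa0) : (S × A) × Bool) (fun _ => (1:ℝ))]
      simp
  | t+1 => by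
      simp only [maskedDist]
      rw [Finset.sum_comm]
      have key : ∀ y : (S × A) × Bool,
          (∑ x : (S × A) × Bool, maskedDist P Pm π M sa0 t y *
            (if y.2 then Pm y.1 x.1.1 else P y.1 x.1.1) * π x.1.1 x.1.2 *
            (if x.2 = (y.2 && M x.1) then (1:ℝ) else 0))
          = maskedDist P Pm π M sa0 t y := by
        intro y
        rw [Fintype.sum_prod_type]
        have hb : ∀ sa : S × A,
            (∑ b : Bool, maskedDist P Pm π M sa0 t y *
              (if y.2 then Pm y.1 sa.1 else P y.1 sa.1) * π sa.1 sa.2 *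
              (if b = (y.2 && M sa) then (1:ℝ) else 0))
            = maskedDist P Pm π M sa0 t y *
              (if y.2 then Pm y.1 sa.1 else P y.1 sa.1) * π sa.1 sa.2 := by
          intro sa
          rw [← Finset.mul_sum]
          have : (∑ b : Bool, if b = (y.2 && M sa) then (1:ℝ) else 0) = 1 := by
            cases (y.2 && M sa) <;> simp
          rw [this, mul_one]
        rw [Finset.sum_congr rfl fun sa _ => hb sa, Fintype.sum_prod_type]
        have hc : ∀ s : S,
            (∑ a : A, maskedDist P Pm π M sa0 t y *
              (if y.2 then Pm y.1 s else P y.1 s) * π s a)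
            = maskedDist P Pm π M sa0 t y * (if y.2 then Pm y.1 s else P y.1 s) := by
          intro s; rw [← Finset.mul_sum, hπ1, mul_one]
        rw [Finset.sum_congr rfl fun s _ => hc s, ← Finset.mul_sum]
        have : (∑ s : S, (if y.2 then Pm y.1 s else P y.1 s)) = 1 := by
          cases hy : y.2 <;> simp [hy, hP1, hPm1]
        rw [this, mul_one]
      rw [Finset.sum_congr rfl fun y _ => key y]
      exact maskedDist_mass hP1 hPm1 hπ1 t

lemma maskedDist_flag :
    ∀ t (sa : S × A), M sa = false → maskedDist P Pm π M sa0 t (sa, true) = 0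
  | 0, sa, h => by
      simp only [maskedDist]
      rw [if_neg]
      rintro ⟨h1, h2⟩
      rw [h1] at h
      rw [← h2] at h
      exact Bool.noConfusion h
  | t+1, sa, h => by
      simp only [maskedDist]
      apply Finset.sum_eq_zero
      intro y _
      simp [h]

end aux

section aux2
variable {S A : Type*} [Fintype S] [Fintype A] [DecidableEq S] [DecidableEq A]
variable (P Pm : S × A → S → ℝ) (π : S → A → ℝ) (M : S × A → Bool) (sa0 : S × A)

lemma key_D (hP0 : ∀ sa s', 0 ≤ P sa s') (hPm0 : ∀ sa s', 0 ≤ Pm sa s')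
    (hP1 : ∀ sa, ∑ s', P sa s' = 1)
    (hπ0 : ∀ s a, 0 ≤ π s a) (hπ1 : ∀ s, ∑ a, π s a = 1)
    (ε : ℝ) (hε : ∀ sa, M sa = true → tv (P sa) (Pm sa) ≤ ε) :
    ∀ t, (∑ sa : S × A, |plainDist P π sa0 t sa -
        (maskedDist P Pm π M sa0 t (sa, true) + maskedDist P Pm π M sa0 t (sa, false))|)
      ≤ 2 * ε * ∑ k ∈ Finset.range t, wProb P Pm π M sa0 k
  | 0 => by
      have h : ∀ sa : S × A, plainDist P π sa0 0 sa
          - (maskedDist P Pm π M sa0 0 (sa, true) + maskedDist P Pm π M sa0 0 (sa, false)) = 0 := by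
        intro sa
        simp only [plainDist, maskedDist]
        by_cases h1 : sa = sa0 <;> cases h2 : M sa0 <;> simp [h1, h2]
      rw [Finset.sum_congr rfl fun sa _ => by rw [h sa, abs_zero]]
      simp
  | t+1 => by
      have ih := key_D hP0 hPm0 hP1 hπ0 hπ1 ε hε t
      have hmarg : ∀ sa : S × A,
          maskedDist P Pm π M sa0 (t+1) (sa, true) + maskedDist P Pm π M sa0 (t+1) (sa, false)
          = (∑ sa' : S × A, (maskedDist P Pm π M sa0 t (sa', true) * Pm sa' sa.1
              + maskedDist P Pm π M sa0 t (sa', false) * P sa' sa.1)) * π sa.1 sa.2 := by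
        intro sa
        simp only [maskedDist]
        rw [← Finset.sum_add_distrib]
        have h1 : ∀ y : (S × A) × Bool,
            maskedDist P Pm π M sa0 t y * (if y.2 then Pm y.1 (sa, true).1.1 else P y.1 (sa, true).1.1)
                * π (sa, true).1.1 (sa, true).1.2 *
              (if (sa, true).2 = (y.2 && M (sa, true).1) then (1:ℝ) else 0)
            + maskedDist P Pm π M sa0 t y * (if y.2 then Pm y.1 (sa, false).1.1 else P y.1 (sa, false).1.1)
                * π (sa, false).1.1 (sa, false).1.2 *
              (if (sa, false).2 = (y.2 && M (sa, false).1) then (1:ℝ) else 0)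
            = maskedDist P Pm π M sa0 t y * (if y.2 then Pm y.1 sa.1 else P y.1 sa.1) * π sa.1 sa.2 := by
          intro y; cases hb : (y.2 && M sa) <;> simp [hb]
        rw [Finset.sum_congr rfl fun y _ => h1 y, Fintype.sum_prod_type, Finset.sum_mul]
        apply Finset.sum_congr rfl
        intro sa' _
        rw [Fintype.sum_bool]
        have e1 : (if (true:Bool) = true then Pm sa' sa.1 else P sa' sa.1) = Pm sa' sa.1 := rfl
        have e2 : (if (false:Bool) = true then Pm sa' sa.1 else P sa' sa.1) = P sa' sa.1 := rfl
        rw [e1, e2]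
        ring
      have hdiff : ∀ sa : S × A,
          plainDist P π sa0 (t+1) sa
            - (maskedDist P Pm π M sa0 (t+1) (sa, true) + maskedDist P Pm π M sa0 (t+1) (sa, false))
          = (∑ sa' : S × A,
              (P sa' sa.1 * (plainDist P π sa0 t sa'
                  - (maskedDist P Pm π M sa0 t (sa', true) + maskedDist P Pm π M sa0 t (sa', false)))
               + (P sa' sa.1 - Pm sa' sa.1) * maskedDist P Pm π M sa0 t (sa', true)))
            * π sa.1 sa.2 := by
        intro sa
        rw [hmarg sa]
        simp only [plainDist]
        rw [← sub_mul, ← Finset.sum_sub_distrib]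
        congr 1
        apply Finset.sum_congr rfl
        intro sa' _
        ring
      calc (∑ sa : S × A, |plainDist P π sa0 (t+1) sa -
              (maskedDist P Pm π M sa0 (t+1) (sa, true) + maskedDist P Pm π M sa0 (t+1) (sa, false))|)
          = ∑ sa : S × A,
              |∑ sa' : S × A,
                (P sa' sa.1 * (plainDist P π sa0 t sa'
                    - (maskedDist P Pm π M sa0 t (sa', true) + maskedDist P Pm π M sa0 t (sa', false)))
                 + (P sa' sa.1 - Pm sa' sa.1) * maskedDist P Pm π M sa0 t (sa', true))|
              * π sa.1 sa.2 := by
            apply Finset.sum_congr rfl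
            intro sa _
            rw [hdiff sa, abs_mul, abs_of_nonneg (hπ0 _ _)]
        _ ≤ ∑ sa : S × A,
              (∑ sa' : S × A,
                (P sa' sa.1 * |plainDist P π sa0 t sa'
                    - (maskedDist P Pm π M sa0 t (sa', true) + maskedDist P Pm π M sa0 t (sa', false))|
                 + |P sa' sa.1 - Pm sa' sa.1| * maskedDist P Pm π M sa0 t (sa', true)))
              * π sa.1 sa.2 := by
            apply Finset.sum_le_sum
            intro sa _
            apply mul_le_mul_of_nonneg_right _ (hπ0 _ _)
            refine (Finset.abs_sum_le_sum_abs _ _).trans (Finset.sum_le_sum fun sa' _ => ?_)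
            refine (abs_add_le _ _).trans ?_
            rw [abs_mul, abs_mul, abs_of_nonneg (hP0 _ _),
              abs_of_nonneg (maskedDist_nonneg P Pm π M sa0 hP0 hPm0 hπ0 t _)]
        _ = ∑ sa' : S × A,
              (|plainDist P π sa0 t sa'
                  - (maskedDist P Pm π M sa0 t (sa', true) + maskedDist P Pm π M sa0 t (sa', false))|
               + maskedDist P Pm π M sa0 t (sa', true) * ∑ s : S, |P sa' s - Pm sa' s|) := by
            rw [Fintype.sum_prod_type]
            have h1 : ∀ s : S,
                (∑ a : A, (∑ sa' : S × A,
                    (P sa' s * |plainDist P π sa0 t sa'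
                        - (maskedDist P Pm π M sa0 t (sa', true) + maskedDist P Pm π M sa0 t (sa', false))|
                     + |P sa' s - Pm sa' s| * maskedDist P Pm π M sa0 t (sa', true))) * π s a)
                = ∑ sa' : S × A,
                    (P sa' s * |plainDist P π sa0 t sa'
                        - (maskedDist P Pm π M sa0 t (sa', true) + maskedDist P Pm π M sa0 t (sa', false))|
                     + |P sa' s - Pm sa' s| * maskedDist P Pm π M sa0 t (sa', true)) := by
              intro s; rw [← Finset.mul_sum, hπ1, mul_one]
            rw [Finset.sum_congr rfl fun s _ => h1 s, Finset.sum_comm]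
            apply Finset.sum_congr rfl
            intro sa' _
            rw [Finset.sum_add_distrib, ← Finset.sum_mul, hP1, one_mul, ← Finset.sum_mul]
            ring
        _ ≤ (∑ sa' : S × A,
              |plainDist P π sa0 t sa'
                  - (maskedDist P Pm π M sa0 t (sa', true) + maskedDist P Pm π M sa0 t (sa', false))|)
            + 2 * ε * wProb P Pm π M sa0 t := by
            rw [Finset.sum_add_distrib]
            apply add_le_add_right
            have : ∀ sa' : S × A,
                maskedDist P Pm π M sa0 t (sa', true) * ∑ s : S, |P sa' s - Pm sa' s|
                  ≤ maskedDist P Pm π M sa0 t (sa', true) * (2 * ε) := by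
              intro sa'
              cases hM : M sa' with
              | false => rw [maskedDist_flag P Pm π M sa0 t sa' hM]; simp
              | true =>
                apply mul_le_mul_of_nonneg_left _ (maskedDist_nonneg P Pm π M sa0 hP0 hPm0 hπ0 t _)
                have htv := hε sa' hM
                unfold tv at htv
                linarith
            refine (Finset.sum_le_sum fun sa' _ => this sa').trans ?_
            rw [← Finset.sum_mul]
            unfold wProb
            ring_nf
            exact le_refl _
        _ ≤ 2 * ε * (∑ k ∈ Finset.range t, wProb P Pm π M sa0 k) + 2 * ε * wProb P Pm π M sa0 t := by
            exact add_le_add_left ih _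
        _ = 2 * ε * ∑ k ∈ Finset.range (t+1), wProb P Pm π M sa0 k := by
            rw [Finset.sum_range_succ]; ring

end aux2

section aux3
variable {S A : Type*} [Fintype S] [Fintype A] [DecidableEq S] [DecidableEq A]
variable (P Pm : S × A → S → ℝ) (π : S → A → ℝ) (M : S × A → Bool) (sa0 : S × A)

lemma masked_marginal_sum (t : ℕ) (g : S × A → ℝ) :
    (∑ x : (S × A) × Bool, g x.1 * maskedDist P Pm π M sa0 t x)
      = ∑ sa : S × A, g sa * (maskedDist P Pm π M sa0 t (sa, true)
          + maskedDist P Pm π M sa0 t (sa, false)) := by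
  rw [Fintype.sum_prod_type]
  apply Finset.sum_congr rfl
  intro sa _
  rw [Fintype.sum_bool]
  ring

lemma wProb_nonneg (hP0 : ∀ sa s', 0 ≤ P sa s') (hPm0 : ∀ sa s', 0 ≤ Pm sa s')
    (hπ0 : ∀ s a, 0 ≤ π s a) (t : ℕ) : 0 ≤ wProb P Pm π M sa0 t :=
  Finset.sum_nonneg fun sa _ => maskedDist_nonneg P Pm π M sa0 hP0 hPm0 hπ0 t _

lemma wProb_le_one (hP0 : ∀ sa s', 0 ≤ P sa s') (hPm0 : ∀ sa s', 0 ≤ Pm sa s')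
    (hP1 : ∀ sa, ∑ s', P sa s' = 1) (hPm1 : ∀ sa, ∑ s', Pm sa s' = 1)
    (hπ0 : ∀ s a, 0 ≤ π s a) (hπ1 : ∀ s, ∑ a, π s a = 1) (t : ℕ) :
    wProb P Pm π M sa0 t ≤ 1 := by
  have h := masked_marginal_sum P Pm π M sa0 t (fun _ => (1:ℝ))
  simp only [one_mul] at h
  calc wProb P Pm π M sa0 t
      ≤ ∑ sa : S × A, (maskedDist P Pm π M sa0 t (sa, true)
          + maskedDist P Pm π M sa0 t (sa, false)) := by
        apply Finset.sum_le_sum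
        intro sa _
        exact le_add_of_nonneg_right (maskedDist_nonneg P Pm π M sa0 hP0 hPm0 hπ0 t _)
    _ = 1 := by rw [← h, maskedDist_mass P Pm π M sa0 hP1 hPm1 hπ1 t]

lemma swap_sum (w : ℕ → ℝ) (γ : ℝ) : ∀ N : ℕ,
    (∑ t ∈ Finset.range N, γ ^ t * ∑ k ∈ Finset.range t, w k)
      = ∑ k ∈ Finset.range N, w k * ∑ t ∈ Finset.Ico (k+1) N, γ ^ t
  | 0 => by simp
  | N+1 => by
      rw [Finset.sum_range_succ, swap_sum w γ N, Finset.sum_range_succ,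
        Finset.Ico_self, Finset.sum_empty, mul_zero, add_zero]
      have h : ∀ k ∈ Finset.range N,
          w k * ∑ t ∈ Finset.Ico (k+1) (N+1), γ ^ t
            = w k * ∑ t ∈ Finset.Ico (k+1) N, γ ^ t + w k * γ ^ N := by
        intro k hk
        rw [Finset.sum_Ico_succ_top (Finset.mem_range.mp hk), mul_add]
      rw [Finset.sum_congr rfl h, Finset.sum_add_distrib, ← Finset.sum_mul]
      ring

lemma tail_geom {γ : ℝ} (hγ0 : 0 < γ) (hγ1 : γ < 1) (k N : ℕ) :
    (∑ t ∈ Finset.Ico (k+1) N, γ ^ t) ≤ γ ^ k * (1 - γ)⁻¹ := by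
  have h1γ : 0 < 1 - γ := by linarith
  calc (∑ t ∈ Finset.Ico (k+1) N, γ ^ t) ≤ γ ^ (k+1) / (1 - γ) :=
        geom_sum_Ico_le_of_lt_one hγ0.le hγ1
    _ ≤ γ ^ k / (1 - γ) := by
        rw [div_eq_mul_inv, div_eq_mul_inv]
        exact mul_le_mul_of_nonneg_right
          (pow_le_pow_of_le_one hγ0.le hγ1.le (Nat.le_succ k)) (by positivity)
    _ = γ ^ k * (1 - γ)⁻¹ := div_eq_mul_inv _ _

end aux3

section aux4
variable {S A : Type*} [Fintype S] [Fintype A] [DecidableEq S] [DecidableEq A]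
variable (P Pm : S × A → S → ℝ) (π : S → A → ℝ) (M : S × A → Bool) (sa0 : S × A)

lemma step_diff (hP0 : ∀ sa s', 0 ≤ P sa s') (hPm0 : ∀ sa s', 0 ≤ Pm sa s')
    (hP1 : ∀ sa, ∑ s', P sa s' = 1)
    (hπ0 : ∀ s a, 0 ≤ π s a) (hπ1 : ∀ s, ∑ a, π s a = 1)
    (r : S × A → ℝ) (rmax : ℝ) (hr : ∀ sa, |r sa| ≤ rmax)
    (ε : ℝ) (hε : ∀ sa, M sa = true → tv (P sa) (Pm sa) ≤ ε) (hrm : 0 ≤ rmax) (t : ℕ) :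
    |(∑ sa, r sa * plainDist P π sa0 t sa)
        - ∑ x : (S × A) × Bool, r x.1 * maskedDist P Pm π M sa0 t x|
      ≤ rmax * (2 * ε * ∑ k ∈ Finset.range t, wProb P Pm π M sa0 k) := by
  rw [masked_marginal_sum, ← Finset.sum_sub_distrib]
  have h1 : ∀ sa : S × A,
      r sa * plainDist P π sa0 t sa
        - r sa * (maskedDist P Pm π M sa0 t (sa, true) + maskedDist P Pm π M sa0 t (sa, false))
      = r sa * (plainDist P π sa0 t sa
          - (maskedDist P Pm π M sa0 t (sa, true) + maskedDist P Pm π M sa0 t (sa, false))) := by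
    intro sa; ring
  rw [Finset.sum_congr rfl fun sa _ => h1 sa]
  calc |∑ sa : S × A, r sa * (plainDist P π sa0 t sa
          - (maskedDist P Pm π M sa0 t (sa, true) + maskedDist P Pm π M sa0 t (sa, false)))|
      ≤ ∑ sa : S × A, |r sa * (plainDist P π sa0 t sa
          - (maskedDist P Pm π M sa0 t (sa, true) + maskedDist P Pm π M sa0 t (sa, false)))| :=
        Finset.abs_sum_le_sum_abs _ _
    _ ≤ ∑ sa : S × A, rmax * |plainDist P π sa0 t sa
          - (maskedDist P Pm π M sa0 t (sa, true) + maskedDist P Pm π M sa0 t (sa, false))| := by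
        apply Finset.sum_le_sum
        intro sa _
        rw [abs_mul]
        exact mul_le_mul_of_nonneg_right (hr sa) (abs_nonneg _)
    _ = rmax * ∑ sa : S × A, |plainDist P π sa0 t sa
          - (maskedDist P Pm π M sa0 t (sa, true) + maskedDist P Pm π M sa0 t (sa, false))| := by
        rw [Finset.mul_sum]
    _ ≤ rmax * (2 * ε * ∑ k ∈ Finset.range t, wProb P Pm π M sa0 k) :=
        mul_le_mul_of_nonneg_left (key_D P Pm π M sa0 hP0 hPm0 hP1 hπ0 hπ1 ε hε t) hrm

end aux4

/-- Masked rollout Q-value bound: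
`|Q^π(s,a) - Q̃^π_mask(s,a)| ≤ (2 r_max/(1-γ)) ε Σ_t γ^t w(t;s,a)`. -/
theorem stmt_9 {S A : Type*} [Fintype S] [Fintype A] [DecidableEq S] [DecidableEq A]
    (P Pm : S × A → S → ℝ) (π : S → A → ℝ) (M : S × A → Bool)
    (hP0 : ∀ sa s', 0 ≤ P sa s') (hPm0 : ∀ sa s', 0 ≤ Pm sa s')
    (hP1 : ∀ sa, ∑ s', P sa s' = 1) (hPm1 : ∀ sa, ∑ s', Pm sa s' = 1)
    (hπ0 : ∀ s a, 0 ≤ π s a) (hπ1 : ∀ s, ∑ a, π s a = 1)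
    (r : S × A → ℝ) (rmax : ℝ) (hr : ∀ sa, |r sa| ≤ rmax)
    (γ : ℝ) (hγ : γ ∈ Set.Ioo (0 : ℝ) 1)
    (ε : ℝ) (hε0 : 0 ≤ ε)
    (hε : ∀ sa, M sa = true → tv (P sa) (Pm sa) ≤ ε)
    (sa0 : S × A) :
    |(∑' t : ℕ, γ ^ t * ∑ sa, r sa * plainDist P π sa0 t sa)
        - (∑' t : ℕ, γ ^ t * ∑ x : (S × A) × Bool,
            r x.1 * maskedDist P Pm π M sa0 t x)|
      ≤ (2 * rmax / (1 - γ)) * ε * ∑' t : ℕ, γ ^ t * wProb P Pm π M sa0 t := by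
  obtain ⟨hγ0, hγ1⟩ := hγ
  have h1γ : (0:ℝ) < 1 - γ := by linarith
  rcases isEmpty_or_nonempty (S × A) with hemp | hne
  · simp [wProb]
  obtain ⟨sa1⟩ := hne
  have hrm : 0 ≤ rmax := le_trans (abs_nonneg _) (hr sa1)
  -- uniform bounds on per-step rewards
  have hνbd : ∀ t, |∑ sa, r sa * plainDist P π sa0 t sa| ≤ rmax := by
    intro t
    calc |∑ sa, r sa * plainDist P π sa0 t sa|
        ≤ ∑ sa, |r sa * plainDist P π sa0 t sa| := Finset.abs_sum_le_sum_abs _ _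
      _ ≤ ∑ sa, rmax * plainDist P π sa0 t sa := by
          apply Finset.sum_le_sum
          intro sa _
          rw [abs_mul, abs_of_nonneg (plainDist_nonneg P π sa0 hP0 hπ0 t sa)]
          exact mul_le_mul_of_nonneg_right (hr sa) (plainDist_nonneg P π sa0 hP0 hπ0 t sa)
      _ = rmax := by rw [← Finset.mul_sum, plainDist_mass P π sa0 hP1 hπ1 t, mul_one]
  have hμbd : ∀ t, |∑ x : (S × A) × Bool, r x.1 * maskedDist P Pm π M sa0 t x| ≤ rmax := by
    intro t
    calc |∑ x : (S × A) × Bool, r x.1 * maskedDist P Pm π M sa0 t x|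
        ≤ ∑ x : (S × A) × Bool, |r x.1 * maskedDist P Pm π M sa0 t x| :=
          Finset.abs_sum_le_sum_abs _ _
      _ ≤ ∑ x : (S × A) × Bool, rmax * maskedDist P Pm π M sa0 t x := by
          apply Finset.sum_le_sum
          intro x _
          rw [abs_mul, abs_of_nonneg (maskedDist_nonneg P Pm π M sa0 hP0 hPm0 hπ0 t x)]
          exact mul_le_mul_of_nonneg_right (hr x.1)
            (maskedDist_nonneg P Pm π M sa0 hP0 hPm0 hπ0 t x)
      _ = rmax := by rw [← Finset.mul_sum, maskedDist_mass P Pm π M sa0 hP1 hPm1 hπ1 t, mul_one]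
  have hgs : Summable (fun t : ℕ => γ ^ t) := summable_geometric_of_lt_one hγ0.le hγ1
  have hgpos : ∀ t : ℕ, (0:ℝ) ≤ γ ^ t := fun t => pow_nonneg hγ0.le t
  have hSa : Summable (fun t => γ ^ t * ∑ sa, r sa * plainDist P π sa0 t sa) := by
    apply Summable.of_norm_bounded (g := fun t => rmax * γ ^ t) (hgs.mul_left rmax)
    intro t
    rw [Real.norm_eq_abs, abs_mul, abs_of_nonneg (hgpos t), mul_comm]
    exact mul_le_mul_of_nonneg_right (hνbd t) (hgpos t)
  have hSb : Summable (fun t => γ ^ t * ∑ x : (S × A) × Bool,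
      r x.1 * maskedDist P Pm π M sa0 t x) := by
    apply Summable.of_norm_bounded (g := fun t => rmax * γ ^ t) (hgs.mul_left rmax)
    intro t
    rw [Real.norm_eq_abs, abs_mul, abs_of_nonneg (hgpos t), mul_comm]
    exact mul_le_mul_of_nonneg_right (hμbd t) (hgpos t)
  have hw0 : ∀ t, 0 ≤ wProb P Pm π M sa0 t := wProb_nonneg P Pm π M sa0 hP0 hPm0 hπ0
  have hw1 : ∀ t, wProb P Pm π M sa0 t ≤ 1 :=
    wProb_le_one P Pm π M sa0 hP0 hPm0 hP1 hPm1 hπ0 hπ1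
  have hSw : Summable (fun t => γ ^ t * wProb P Pm π M sa0 t) := by
    apply Summable.of_nonneg_of_le (fun t => mul_nonneg (hgpos t) (hw0 t)) _ hgs
    intro t
    calc γ ^ t * wProb P Pm π M sa0 t ≤ γ ^ t * 1 :=
          mul_le_mul_of_nonneg_left (hw1 t) (hgpos t)
      _ = γ ^ t := mul_one _
  have hG : Summable (fun t : ℕ => γ ^ t * ∑ k ∈ Finset.range t, wProb P Pm π M sa0 k) := by
    apply Summable.of_nonneg_of_le
      (fun t => mul_nonneg (hgpos t) (Finset.sum_nonneg fun k _ => hw0 k))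
      _ (summable_pow_mul_geometric_of_norm_lt_one 1
          (by rwa [Real.norm_eq_abs, abs_of_nonneg hγ0.le]))
    intro t
    calc γ ^ t * ∑ k ∈ Finset.range t, wProb P Pm π M sa0 k
        ≤ γ ^ t * (t : ℝ) := by
          apply mul_le_mul_of_nonneg_left _ (hgpos t)
          calc (∑ k ∈ Finset.range t, wProb P Pm π M sa0 k)
              ≤ ∑ _k ∈ Finset.range t, (1:ℝ) := Finset.sum_le_sum fun k _ => hw1 k
            _ = (t : ℝ) := by simp
      _ = (t : ℝ) ^ 1 * γ ^ t := by ring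
  -- pointwise bound
  have hpt : ∀ t : ℕ,
      |γ ^ t * (∑ sa, r sa * plainDist P π sa0 t sa)
        - γ ^ t * ∑ x : (S × A) × Bool, r x.1 * maskedDist P Pm π M sa0 t x|
      ≤ 2 * rmax * ε * (γ ^ t * ∑ k ∈ Finset.range t, wProb P Pm π M sa0 k) := by
    intro t
    rw [← mul_sub, abs_mul, abs_of_nonneg (hgpos t)]
    calc γ ^ t * |(∑ sa, r sa * plainDist P π sa0 t sa)
          - ∑ x : (S × A) × Bool, r x.1 * maskedDist P Pm π M sa0 t x|
        ≤ γ ^ t * (rmax * (2 * ε * ∑ k ∈ Finset.range t, wProb P Pm π M sa0 k)) :=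
          mul_le_mul_of_nonneg_left
            (step_diff P Pm π M sa0 hP0 hPm0 hP1 hπ0 hπ1 r rmax hr ε hε hrm t) (hgpos t)
      _ = 2 * rmax * ε * (γ ^ t * ∑ k ∈ Finset.range t, wProb P Pm π M sa0 k) := by ring
  -- partial-sum bound for the exchanged double sum
  have key2 : (∑' t : ℕ, γ ^ t * ∑ k ∈ Finset.range t, wProb P Pm π M sa0 k)
      ≤ (1 - γ)⁻¹ * ∑' t : ℕ, γ ^ t * wProb P Pm π M sa0 t := by
    apply Real.tsum_le_of_sum_range_le
      (fun t => mul_nonneg (hgpos t) (Finset.sum_nonneg fun k _ => hw0 k))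
    intro N
    rw [swap_sum]
    calc (∑ k ∈ Finset.range N, wProb P Pm π M sa0 k * ∑ t ∈ Finset.Ico (k+1) N, γ ^ t)
        ≤ ∑ k ∈ Finset.range N, wProb P Pm π M sa0 k * (γ ^ k * (1 - γ)⁻¹) := by
          apply Finset.sum_le_sum
          intro k _
          exact mul_le_mul_of_nonneg_left (tail_geom hγ0 hγ1 k N) (hw0 k)
      _ = (1 - γ)⁻¹ * ∑ k ∈ Finset.range N, γ ^ k * wProb P Pm π M sa0 k := by
          rw [Finset.mul_sum]
          apply Finset.sum_congr rfl
          intro k _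
          ring
      _ ≤ (1 - γ)⁻¹ * ∑' t : ℕ, γ ^ t * wProb P Pm π M sa0 t := by
          apply mul_le_mul_of_nonneg_left _ (by positivity)
          exact Summable.sum_le_tsum _ (fun t _ => mul_nonneg (hgpos t) (hw0 t)) hSw
  -- assemble
  rw [← Summable.tsum_sub hSa hSb]
  calc |∑' t : ℕ, (γ ^ t * (∑ sa, r sa * plainDist P π sa0 t sa)
          - γ ^ t * ∑ x : (S × A) × Bool, r x.1 * maskedDist P Pm π M sa0 t x)|
      ≤ ∑' t : ℕ, |γ ^ t * (∑ sa, r sa * plainDist P π sa0 t sa)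
          - γ ^ t * ∑ x : (S × A) × Bool, r x.1 * maskedDist P Pm π M sa0 t x| := by
        have := norm_tsum_le_tsum_norm (f := fun t : ℕ =>
          γ ^ t * (∑ sa, r sa * plainDist P π sa0 t sa)
            - γ ^ t * ∑ x : (S × A) × Bool, r x.1 * maskedDist P Pm π M sa0 t x)
          ((hSa.sub hSb).abs)
        simpa [Real.norm_eq_abs] using this
    _ ≤ ∑' t : ℕ, 2 * rmax * ε * (γ ^ t * ∑ k ∈ Finset.range t, wProb P Pm π M sa0 k) := by
        apply Summable.tsum_le_tsum hpt ((hSa.sub hSb).abs) (hG.mul_left _)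
    _ = 2 * rmax * ε * ∑' t : ℕ, γ ^ t * ∑ k ∈ Finset.range t, wProb P Pm π M sa0 k :=
        tsum_mul_left
    _ ≤ 2 * rmax * ε * ((1 - γ)⁻¹ * ∑' t : ℕ, γ ^ t * wProb P Pm π M sa0 t) :=
        mul_le_mul_of_nonneg_left key2 (by positivity)
    _ = (2 * rmax / (1 - γ)) * ε * ∑' t : ℕ, γ ^ t * wProb P Pm π M sa0 t := by
        rw [div_eq_mul_inv]; ring
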